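/- Let α ∈ (1,∞) and let p_{Y|X} be a channel with p_{Y|X}(y|x) > 0 for all x, y. Let q̃^{(0)}_{X,Y} be a strictly positive probability distribution on 𝒳×𝒴 and define recursively: r^{(k)}_{X|Y}(x|y) := q̃^{(k)}_{X,Y}(x,y)/Σ_{x'} q̃^{(k)}_{X,Y}(x',y); p^{(k+1)}_X(x) := Σ_y q̃^{(k)}_{X,Y}(x,y); and q̃^{(k+1)}_{X,Y}(x,y) := q̂_X(x) q̂_{Y|X}(y|x) built from (p^{(k+1)}_X, r^{(k)}_{X|Y}) via q̂_{Y|X}(y|x) := p_{Y|X}(y|x) r^{(k)}_{X|Y}(x|y)^{1−1/α} / Σ_{y'} p_{Y|X}(y'|x) r^{(k)}_{X|Y}(x|y')^{1−1/α} and q̂_X(x) := p^{(k+1)}_X(x)^{α/(2α−1)} ( Σ_y p_{Y|X}(y|x) r^{(k)}_{X|Y}(x|y)^{1−1/α} )^{α/(2α−1)} / (normalizing sum over x); set p^{(0)}_X(x) := Σ_y q̃^{(0)}_{X,Y}(x,y). Then for every k ≥ 0: F̃_α^{LP}(p^{(k)}_X, q̃^{(k)}_{X,Y}, r^{(k)}_{X|Y})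 ≤ F̃_α^{LP}(p^{(k+1)}_X, q̃^{(k+1)}_{X,Y}, r^{(k)}_{X|Y}) ≤ F̃_α^{LP}(p^{(k+1)}_X, q̃^{(k+1)}_{X,Y}, r^{(k+1)}_{X|Y}) ≤ C_α^{LP}, so the sequence of objective values is nondecreasing and bounded above by the Lapidoth–Pfister capacity C_α^{LP}. -/

import Mathlib

/-- A probability mass function on a finite type. -/
def IsPMF {Z : Type*} [Fintype Z] (q : Z → ℝ) : Prop :=
  (∀ z, 0 ≤ q z) ∧ ∑ z, q z = 1

/-- Kullback--Leibler divergence (natural log). -/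
noncomputable def klD {Z : Type*} [Fintype Z] (p q : Z → ℝ) : ℝ :=
  ∑ z, p z * Real.log (p z / q z)

/-- Rényi divergence of order `α`, valued in `EReal` (equal to `⊤` when `α > 1` and
`q` vanishes somewhere on the support of `p`). -/
noncomputable def renyiDE {Z : Type*} [Fintype Z] (α : ℝ) (p q : Z → ℝ) : EReal :=
  if 1 < α ∧ ∃ z, p z ≠ 0 ∧ q z = 0 then ⊤
  else (((1 / (α - 1)) * Real.log (∑ z, p z ^ α * q z ^ (1 - α)) : ℝ) : EReal)

/-- The Lapidoth--Pfister capacity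
`C_α^{LP} = max_{p_X} min_{q_X, q_Y} D_α(p_X p_{Y|X} ‖ q_X q_Y)`. -/
noncomputable def lpCap {X Y : Type*} [Fintype X] [Fintype Y]
    (α : ℝ) (pYX : X → Y → ℝ) : EReal :=
  sSup {v : EReal | ∃ pX : X → ℝ, IsPMF pX ∧
    v = sInf {w : EReal | ∃ qX : X → ℝ, ∃ qY : Y → ℝ, IsPMF qX ∧ IsPMF qY ∧
      w = renyiDE α (fun z : X × Y => pX z.1 * pYX z.1 z.2)
            (fun z : X × Y => qX z.1 * qY z.2)}}

/-- `F̃_α^{LP}(p_X, q̃_{X,Y}, r_{X|Y})`. -/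
noncomputable def FtildeLP {X Y : Type*} [Fintype X] [Fintype Y]
    (α : ℝ) (pYX : X → Y → ℝ) (pX : X → ℝ) (qt : X × Y → ℝ) (r : Y → X → ℝ) : ℝ :=
  (α / (1 - α)) * klD qt (fun z : X × Y => (∑ y, qt (z.1, y)) * pYX z.1 z.2)
  + ∑ z : X × Y, qt z * Real.log (r z.2 z.1 / ∑ y, qt (z.1, y))
  + (α / (1 - α)) * klD (fun x => ∑ y, qt (x, y)) pX

/-- Posterior reverse channel of a joint distribution. -/
noncomputable def post {X Y : Type*} [Fintype X] [Fintype Y] (q : X × Y → ℝ) :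
    Y → X → ℝ :=
  fun y x => q (x, y) / ∑ x', q (x', y)

/-- `X`-marginal of a joint distribution. -/
noncomputable def margX {X Y : Type*} [Fintype X] [Fintype Y] (q : X × Y → ℝ) :
    X → ℝ :=
  fun x => ∑ y, q (x, y)

/-- One step of the alternating-optimization update: `q̃^{(k+1)} = q̂_X q̂_{Y|X}` built
from `p^{(k+1)} = margX q̃^{(k)}` and `r^{(k)} = post q̃^{(k)}`. -/
noncomputable def nextq {X Y : Type*} [Fintype X] [Fintype Y]
    (α : ℝ) (pYX : X → Y → ℝ) (q : X × Y → ℝ) : X × Y → ℝ :=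
  fun z =>
    (margX q z.1 ^ (α / (2 * α - 1)) *
        (∑ y, pYX z.1 y * post q y z.1 ^ (1 - 1 / α)) ^ (α / (2 * α - 1)) /
      ∑ x', margX q x' ^ (α / (2 * α - 1)) *
        (∑ y, pYX x' y * post q y x' ^ (1 - 1 / α)) ^ (α / (2 * α - 1))) *
    (pYX z.1 z.2 * post q z.2 z.1 ^ (1 - 1 / α) /
      ∑ y', pYX z.1 y' * post q y' z.1 ^ (1 - 1 / α))

/-- The sequence `q̃^{(k)}` of joint distributions generated by the AO algorithm. -/
noncomputable def qseq {X Y : Type*} [Fintype X] [Fintype Y]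
    (α : ℝ) (pYX : X → Y → ℝ) (q0 : X × Y → ℝ) : ℕ → X × Y → ℝ
  | 0 => q0
  | k + 1 => nextq α pYX (qseq α pYX q0 k)

/-- The sequence `p^{(k)}` of input distributions: `p^{(0)} = margX q̃^{(0)}` and
`p^{(k+1)} = margX q̃^{(k)}`. -/
noncomputable def pseq {X Y : Type*} [Fintype X] [Fintype Y]
    (α : ℝ) (pYX : X → Y → ℝ) (q0 : X × Y → ℝ) (k : ℕ) : X → ℝ :=
  margX (qseq α pYX q0 (k - 1))
namespace AOproof
open Finset Real

/-! ### Gibbs inequality -/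

lemma gibbs_aux {Z : Type*} [Fintype Z] (f g : Z → ℝ) (hf : ∀ z, 0 ≤ f z)
    (hg : ∀ z, 0 < g z) (hfg : ∑ z, g z ≤ ∑ z, f z) :
    0 ≤ ∑ z, f z * Real.log (f z / g z) := by
  have key : ∀ z, f z - g z ≤ f z * Real.log (f z / g z) := by
    intro z
    rcases eq_or_lt_of_le (hf z) with h | h
    · simp [← h]
      linarith [(hg z).le]
    · have h1 : Real.log (g z / f z) ≤ g z / f z - 1 :=
        Real.log_le_sub_one_of_pos (div_pos (hg z) h)
      have h2 : Real.log (f z / g z) = - Real.log (g z / f z) := by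
        rw [Real.log_div (ne_of_gt h) (ne_of_gt (hg z)),
          Real.log_div (ne_of_gt (hg z)) (ne_of_gt h)]; ring
      rw [h2]
      have h3 : 1 - g z / f z ≤ - Real.log (g z / f z) := by linarith
      have := mul_le_mul_of_nonneg_left h3 (hf z)
      calc f z - g z = f z * (1 - g z / f z) := by field_simp
        _ ≤ f z * -Real.log (g z / f z) := this
  calc (0:ℝ) = ∑ z, f z - ∑ z, g z + (∑ z, g z - ∑ z, f z) := by ring
    _ ≤ ∑ z, f z - ∑ z, g z := by linarith
    _ = ∑ z, (f z - g z) := by rw [Finset.sum_sub_distrib]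
    _ ≤ _ := Finset.sum_le_sum (fun z _ => key z)

lemma klD_nonneg {Z : Type*} [Fintype Z] {f g : Z → ℝ} (hf : ∀ z, 0 ≤ f z)
    (hg : ∀ z, 0 < g z) (hfg : ∑ z, g z ≤ ∑ z, f z) : 0 ≤ klD f g :=
  gibbs_aux f g hf hg hfg

lemma klD_self {Z : Type*} [Fintype Z] {g : Z → ℝ} (hg : ∀ z, g z ≠ 0) :
    klD g g = 0 := by
  unfold klD
  apply Finset.sum_eq_zero
  intro z _
  rw [div_self (hg z), Real.log_one, mul_zero]

end AOproof
namespace AOproof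
set_option linter.unusedSectionVars false
open Finset Real

section Pos
variable {X Y : Type*} [Fintype X] [Fintype Y] [Nonempty X] [Nonempty Y]

lemma margX_pos {q : X × Y → ℝ} (hq : ∀ z, 0 < q z) (x : X) : 0 < margX q x :=
  Finset.sum_pos (fun y _ => hq (x, y)) Finset.univ_nonempty

lemma isPMF_margX {q : X × Y → ℝ} (hq : IsPMF q) : IsPMF (margX q) := by
  constructor
  · intro x; exact Finset.sum_nonneg fun y _ => hq.1 (x, y)
  · rw [← hq.2, Fintype.sum_prod_type]; rfl

lemma post_pos {q : X × Y → ℝ} (hq : ∀ z, 0 < q z) (y : Y) (x : X) :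
    0 < post q y x :=
  div_pos (hq (x, y)) (Finset.sum_pos (fun x' _ => hq (x', y)) Finset.univ_nonempty)

lemma post_sum {q : X × Y → ℝ} (hq : ∀ z, 0 < q z) (y : Y) :
    ∑ x, post q y x = 1 := by
  unfold post
  rw [← Finset.sum_div, div_self]
  exact ne_of_gt (Finset.sum_pos (fun x' _ => hq (x', y)) Finset.univ_nonempty)

lemma q_eq_post {q : X × Y → ℝ} (hq : ∀ z, 0 < q z) (x : X) (y : Y) :
    q (x, y) = (∑ x', q (x', y)) * post q y x := by
  unfold post
  rw [mul_div_cancel₀]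
  exact ne_of_gt (Finset.sum_pos (fun x' _ => hq (x', y)) Finset.univ_nonempty)

variable {α : ℝ} {pYX : X → Y → ℝ}

lemma s_pos (hpYX : ∀ x y, 0 < pYX x y) {q : X × Y → ℝ} (hq : ∀ z, 0 < q z) (x : X) :
    0 < ∑ y, pYX x y * post q y x ^ (1 - 1 / α) :=
  Finset.sum_pos (fun y _ => mul_pos (hpYX x y)
    (Real.rpow_pos_of_pos (post_pos hq y x) _)) Finset.univ_nonempty

lemma N_pos (hpYX : ∀ x y, 0 < pYX x y) {q : X × Y → ℝ} (hq : ∀ z, 0 < q z) :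
    0 < ∑ x', margX q x' ^ (α / (2 * α - 1)) *
      (∑ y, pYX x' y * post q y x' ^ (1 - 1 / α)) ^ (α / (2 * α - 1)) :=
  Finset.sum_pos (fun x' _ => mul_pos (Real.rpow_pos_of_pos (margX_pos hq x') _)
    (Real.rpow_pos_of_pos (s_pos hpYX hq x') _)) Finset.univ_nonempty

lemma nextq_pos (hpYX : ∀ x y, 0 < pYX x y) {q : X × Y → ℝ} (hq : ∀ z, 0 < q z)
    (z : X × Y) : 0 < nextq α pYX q z := by
  unfold nextq
  exact mul_pos
    (div_pos (mul_pos (Real.rpow_pos_of_pos (margX_pos hq z.1) _)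
      (Real.rpow_pos_of_pos (s_pos hpYX hq z.1) _)) (N_pos hpYX hq))
    (div_pos (mul_pos (hpYX z.1 z.2) (Real.rpow_pos_of_pos (post_pos hq z.2 z.1) _))
      (s_pos hpYX hq z.1))

lemma margX_nextq (hpYX : ∀ x y, 0 < pYX x y) {q : X × Y → ℝ} (hq : ∀ z, 0 < q z)
    (x : X) : margX (nextq α pYX q) x =
      margX q x ^ (α / (2 * α - 1)) *
        (∑ y, pYX x y * post q y x ^ (1 - 1 / α)) ^ (α / (2 * α - 1)) /
      ∑ x', margX q x' ^ (α / (2 * α - 1)) *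
        (∑ y, pYX x' y * post q y x' ^ (1 - 1 / α)) ^ (α / (2 * α - 1)) := by
  unfold margX nextq
  simp only []
  rw [← Finset.mul_sum]
  have : ∑ y, pYX x y * post q y x ^ (1 - 1 / α) /
      (∑ y', pYX x y' * post q y' x ^ (1 - 1 / α)) = 1 := by
    rw [← Finset.sum_div, div_self (ne_of_gt (s_pos hpYX hq x))]
  simp only [div_eq_mul_inv] at this ⊢
  rw [this, mul_one]
  rfl

lemma isPMF_nextq (hpYX : ∀ x y, 0 < pYX x y) {q : X × Y → ℝ} (hq : ∀ z, 0 < q z) :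
    IsPMF (nextq α pYX q) := by
  constructor
  · exact fun z => (nextq_pos hpYX hq z).le
  · have h1 : ∑ z : X × Y, nextq α pYX q z = ∑ x, margX (nextq α pYX q) x := by
      rw [Fintype.sum_prod_type]; rfl
    rw [h1]
    have h2 : ∀ x, margX (nextq α pYX q) x =
        margX q x ^ (α / (2 * α - 1)) *
          (∑ y, pYX x y * post q y x ^ (1 - 1 / α)) ^ (α / (2 * α - 1)) /
        ∑ x', margX q x' ^ (α / (2 * α - 1)) *
          (∑ y, pYX x' y * post q y x' ^ (1 - 1 / α)) ^ (α / (2 * α - 1)) :=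
      margX_nextq hpYX hq
    rw [Finset.sum_congr rfl (fun x _ => h2 x), ← Finset.sum_div,
      div_self (ne_of_gt (N_pos hpYX hq))]

lemma qseq_pos_pmf (hpYX : ∀ x y, 0 < pYX x y) {q0 : X × Y → ℝ} (hq0 : IsPMF q0)
    (hq0pos : ∀ z, 0 < q0 z) (k : ℕ) :
    (∀ z, 0 < qseq α pYX q0 k z) ∧ IsPMF (qseq α pYX q0 k) := by
  induction k with
  | zero => exact ⟨hq0pos, hq0⟩
  | succ n ih =>
    exact ⟨nextq_pos hpYX ih.1, isPMF_nextq hpYX ih.1⟩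

end Pos
end AOproof
namespace AOproof
set_option linter.unusedSectionVars false
set_option maxHeartbeats 1000000
open Finset Real

section Main
variable {X Y : Type*} [Fintype X] [Fintype Y] [Nonempty X] [Nonempty Y]
variable {α : ℝ} {pYX : X → Y → ℝ}

lemma log_nextq (hα : 1 < α) (hpYX : ∀ x y, 0 < pYX x y) {q : X × Y → ℝ}
    (hq : ∀ z, 0 < q z) (z : X × Y) :
    Real.log (nextq α pYX q z) =
      (α / (2 * α - 1)) * Real.log (margX q z.1)
      + (α / (2 * α - 1)) * Real.log (∑ y, pYX z.1 y * post q y z.1 ^ (1 - 1 / α))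
      - Real.log (∑ x', margX q x' ^ (α / (2 * α - 1)) *
          (∑ y, pYX x' y * post q y x' ^ (1 - 1 / α)) ^ (α / (2 * α - 1)))
      + Real.log (pYX z.1 z.2) + (1 - 1 / α) * Real.log (post q z.2 z.1)
      - Real.log (∑ y, pYX z.1 y * post q y z.1 ^ (1 - 1 / α)) := by
  have hm := margX_pos hq z.1
  have hs := s_pos (α := α) hpYX hq z.1
  have hN := N_pos (α := α) hpYX hq
  have hp := hpYX z.1 z.2
  have hr := post_pos hq z.2 z.1
  unfold nextq
  rw [Real.log_mul (by positivity) (by positivity),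
    Real.log_div (by positivity) (by positivity),
    Real.log_div (by positivity) (by positivity),
    Real.log_mul (by positivity) (by positivity),
    Real.log_mul (by positivity) (by positivity),
    Real.log_rpow hm, Real.log_rpow hs, Real.log_rpow hr]
  try ring

lemma log_margX_nextq (hα : 1 < α) (hpYX : ∀ x y, 0 < pYX x y) {q : X × Y → ℝ}
    (hq : ∀ z, 0 < q z) (x : X) :
    Real.log (margX (nextq α pYX q) x) =
      (α / (2 * α - 1)) * Real.log (margX q x)
      + (α / (2 * α - 1)) * Real.log (∑ y, pYX x y * post q y x ^ (1 - 1 / α))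
      - Real.log (∑ x', margX q x' ^ (α / (2 * α - 1)) *
          (∑ y, pYX x' y * post q y x' ^ (1 - 1 / α)) ^ (α / (2 * α - 1))) := by
  have hm := margX_pos hq x
  have hs := s_pos (α := α) hpYX hq x
  have hN := N_pos (α := α) hpYX hq
  rw [margX_nextq hpYX hq x,
    Real.log_div (by positivity) (by positivity),
    Real.log_mul (by positivity) (by positivity),
    Real.log_rpow hm, Real.log_rpow hs]
  try ring

/-- The key identity: for any positive PMF `u`,
`F̃(margX q, u, post q) = M - (α/(α-1)) D(u‖q̂) - D(margX u‖margX q̂)`. -/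
lemma FtildeLP_eq (hα : 1 < α) (hpYX : ∀ x y, 0 < pYX x y) {q : X × Y → ℝ}
    (hq : ∀ z, 0 < q z) {u : X × Y → ℝ} (hu : ∀ z, 0 < u z) (hu1 : ∑ z, u z = 1) :
    FtildeLP α pYX (margX q) u (post q) =
      ((2 * α - 1) / (α - 1)) * Real.log (∑ x', margX q x' ^ (α / (2 * α - 1)) *
          (∑ y, pYX x' y * post q y x' ^ (1 - 1 / α)) ^ (α / (2 * α - 1)))
      - (α / (α - 1)) * klD u (nextq α pYX q)
      - klD (margX u) (margX (nextq α pYX q)) := by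
  set K : ℝ := ((2 * α - 1) / (α - 1)) * Real.log (∑ x', margX q x' ^ (α / (2 * α - 1)) *
      (∑ y, pYX x' y * post q y x' ^ (1 - 1 / α)) ^ (α / (2 * α - 1))) with hK
  have hmargsum : ∀ (f : X → ℝ), ∑ x, margX u x * f x = ∑ z : X × Y, u z * f z.1 := by
    intro f
    rw [Fintype.sum_prod_type]
    refine Finset.sum_congr rfl fun x _ => ?_
    rw [show margX u x * f x = (∑ y, u (x, y)) * f x from rfl, Finset.sum_mul]
  have hL : FtildeLP α pYX (margX q) u (post q) =
      ∑ z : X × Y, u z * ((α / (1 - α)) * Real.log (u z / (margX u z.1 * pYX z.1 z.2))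
        + Real.log (post q z.2 z.1 / margX u z.1)
        + (α / (1 - α)) * Real.log (margX u z.1 / margX q z.1)) := by
    unfold FtildeLP klD
    simp only [show ∀ x : X, (∑ y, u (x, y)) = margX u x from fun _ => rfl]
    rw [hmargsum (fun x => Real.log (margX u x / margX q x)),
      Finset.mul_sum, Finset.mul_sum, ← Finset.sum_add_distrib, ← Finset.sum_add_distrib]
    exact Finset.sum_congr rfl fun z _ => by ring
  have hR : K - (α / (α - 1)) * klD u (nextq α pYX q)
      - klD (margX u) (margX (nextq α pYX q)) =
      ∑ z : X × Y, u z * (K - (α / (α - 1)) * Real.log (u z / nextq α pYX q z)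
        - Real.log (margX u z.1 / margX (nextq α pYX q) z.1)) := by
    unfold klD
    rw [hmargsum (fun x => Real.log (margX u x / margX (nextq α pYX q) x))]
    have e1 : ∑ z : X × Y, u z * (K - (α / (α - 1)) * Real.log (u z / nextq α pYX q z)
          - Real.log (margX u z.1 / margX (nextq α pYX q) z.1))
        = ∑ z : X × Y, (u z * K
          - (α / (α - 1)) * (u z * Real.log (u z / nextq α pYX q z))
          - u z * Real.log (margX u z.1 / margX (nextq α pYX q) z.1)) :=
      Finset.sum_congr rfl fun z _ => by ring
    rw [e1, Finset.sum_sub_distrib, Finset.sum_sub_distrib, ← Finset.sum_mul, hu1,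
      one_mul, ← Finset.mul_sum]
  rw [hL, hR]
  refine Finset.sum_congr rfl fun z _ => ?_
  have hm := margX_pos hq z.1
  have hmu := margX_pos hu z.1
  have hs := s_pos (α := α) hpYX hq z.1
  have hN := N_pos (α := α) hpYX hq
  have hp := hpYX z.1 z.2
  have hr := post_pos hq z.2 z.1
  have hnq := nextq_pos (α := α) hpYX hq z
  have hmnq := margX_pos (nextq_pos (α := α) hpYX hq) z.1
  have huz := hu z
  have hα0 : α ≠ 0 := by positivity
  have hα1 : α - 1 ≠ 0 := by linarith
  have hα1' : (1 : ℝ) - α ≠ 0 := by linarith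
  have hα2 : 2 * α - 1 ≠ 0 := by linarith
  congr 1
  rw [Real.log_div (by positivity) (by positivity),
    Real.log_mul (by positivity) (by positivity),
    Real.log_div (by positivity) (by positivity),
    Real.log_div (by positivity) (by positivity),
    Real.log_div (by positivity) (by positivity),
    Real.log_div (by positivity) (by positivity),
    log_nextq hα hpYX hq z, log_margX_nextq hα hpYX hq z.1, hK]
  generalize Real.log (∑ y, pYX z.1 y * post q y z.1 ^ (1 - 1 / α)) = S
  field_simp
  have h2inv : (2 * α - 1) * (2 * α - 1)⁻¹ = 1 := mul_inv_cancel₀ hα2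
  linear_combination α * (α - 1) * (Real.log (margX q z.1) + S) * h2inv

end Main
end AOproof
namespace AOproof
set_option linter.unusedSectionVars false
set_option maxHeartbeats 1000000
open Finset Real

section Ineqs
variable {X Y : Type*} [Fintype X] [Fintype Y] [Nonempty X] [Nonempty Y]
variable {α : ℝ} {pYX : X → Y → ℝ}

/-- Step 0: replacing `p` by `margX q` does not decrease `F̃`. -/
lemma step0 (hα : 1 < α) {p : X → ℝ} (hp : IsPMF p) (hppos : ∀ x, 0 < p x)
    {q : X × Y → ℝ} (hq : IsPMF q) (hqpos : ∀ z, 0 < q z) (r : Y → X → ℝ) :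
    FtildeLP α pYX p q r ≤ FtildeLP α pYX (margX q) q r := by
  unfold FtildeLP
  have h0 : klD (fun x => ∑ y, q (x, y)) (margX q) = 0 :=
    klD_self (g := margX q) (fun x => ne_of_gt (margX_pos hqpos x))
  have h2 : (0:ℝ) ≤ klD (fun x => ∑ y, q (x, y)) p :=
    klD_nonneg (f := margX q) (fun x => (margX_pos hqpos x).le) hppos
      (by rw [hp.2, (isPMF_margX hq).2])
  have hc : α / (1 - α) ≤ 0 :=
    div_nonpos_of_nonneg_of_nonpos (by linarith) (by linarith)
  have key : α / (1 - α) * klD (fun x => ∑ y, q (x, y)) p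
      ≤ α / (1 - α) * klD (fun x => ∑ y, q (x, y)) (margX q) := by
    rw [h0, mul_zero]
    exact mul_nonpos_of_nonpos_of_nonneg hc h2
  linarith

/-- Step 1: updating `q̃` to `nextq` does not decrease `F̃`. -/
lemma step1 (hα : 1 < α) (hpYX : ∀ x y, 0 < pYX x y)
    {q : X × Y → ℝ} (hq : IsPMF q) (hqpos : ∀ z, 0 < q z) :
    FtildeLP α pYX (margX q) q (post q)
      ≤ FtildeLP α pYX (margX q) (nextq α pYX q) (post q) := by
  have hn := isPMF_nextq (α := α) hpYX hqpos
  have hnpos := nextq_pos (α := α) hpYX hqpos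
  rw [FtildeLP_eq hα hpYX hqpos hqpos hq.2,
    FtildeLP_eq hα hpYX hqpos hnpos hn.2]
  have h1 : klD (nextq α pYX q) (nextq α pYX q) = 0 :=
    klD_self (fun z => ne_of_gt (hnpos z))
  have h2 : klD (margX (nextq α pYX q)) (margX (nextq α pYX q)) = 0 :=
    klD_self (fun x => ne_of_gt (margX_pos hnpos x))
  have h3 : (0:ℝ) ≤ klD q (nextq α pYX q) :=
    klD_nonneg hq.1 hnpos (by rw [hq.2, hn.2])
  have h4 : (0:ℝ) ≤ klD (margX q) (margX (nextq α pYX q)) :=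
    klD_nonneg (fun x => (margX_pos hqpos x).le) (margX_pos hnpos)
      (by rw [(isPMF_margX hq).2, (isPMF_margX hn).2])
  have hc : (0:ℝ) ≤ α / (α - 1) := div_nonneg (by linarith) (by linarith)
  have h5 : (0:ℝ) ≤ α / (α - 1) * klD q (nextq α pYX q) := mul_nonneg hc h3
  rw [h1, h2]
  linarith

/-- Step 2: updating `r` to the posterior of `q` does not decrease `F̃`. -/
lemma step2 (hα : 1 < α) {p : X → ℝ} {q : X × Y → ℝ} (hq : IsPMF q)
    (hqpos : ∀ z, 0 < q z) {r : Y → X → ℝ} (hrpos : ∀ y x, 0 < r y x)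
    (hr1 : ∀ y, ∑ x, r y x = 1) :
    FtildeLP α pYX p q r ≤ FtildeLP α pYX p q (post q) := by
  unfold FtildeLP
  have key : ∑ z : X × Y, q z * Real.log (r z.2 z.1 / ∑ y, q (z.1, y))
      ≤ ∑ z : X × Y, q z * Real.log (post q z.2 z.1 / ∑ y, q (z.1, y)) := by
    rw [← sub_nonneg, ← Finset.sum_sub_distrib]
    have e1 : ∀ z : X × Y, q z * Real.log (post q z.2 z.1 / ∑ y, q (z.1, y))
        - q z * Real.log (r z.2 z.1 / ∑ y, q (z.1, y))
        = q z * Real.log (post q z.2 z.1 / r z.2 z.1) := by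
      intro z
      have hm : 0 < ∑ y, q (z.1, y) := margX_pos hqpos z.1
      have hpo := post_pos hqpos z.2 z.1
      have hrr := hrpos z.2 z.1
      rw [Real.log_div (by positivity) (by positivity),
        Real.log_div (by positivity) (by positivity),
        Real.log_div (by positivity) (by positivity)]
      ring
    rw [Finset.sum_congr rfl (fun z _ => e1 z), Fintype.sum_prod_type_right]
    apply Finset.sum_nonneg
    intro y _
    have hQ : (0:ℝ) ≤ ∑ x', q (x', y) :=
      Finset.sum_nonneg (fun x' _ => (hqpos (x', y)).le)
    have e2 : ∀ x, q (x, y) * Real.log (post q y x / r y x)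
        = (∑ x', q (x', y)) * (post q y x * Real.log (post q y x / r y x)) := by
      intro x
      rw [q_eq_post hqpos x y]; ring
    rw [Finset.sum_congr rfl (fun x _ => e2 x), ← Finset.mul_sum]
    exact mul_nonneg hQ (gibbs_aux (post q y) (r y)
      (fun x => (post_pos hqpos y x).le) (hrpos y)
      (by rw [hr1 y, post_sum hqpos y]))
  linarith

end Ineqs
end AOproof
namespace AOproof
set_option linter.unusedSectionVars false
set_option maxHeartbeats 1000000
open Finset Real

section Cap
variable {X Y : Type*} [Fintype X] [Fintype Y] [Nonempty X] [Nonempty Y]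
variable {α : ℝ} {pYX : X → Y → ℝ}

lemma Ftilde_le_renyi (hα : 1 < α) (hpYX : ∀ x y, 0 < pYX x y)
    {pX : X → ℝ} (hpXpos : ∀ x, 0 < pX x)
    {qt : X × Y → ℝ} (hqtpos : ∀ z, 0 < qt z) (hqt1 : ∑ z, qt z = 1)
    {qX : X → ℝ} (hqX : IsPMF qX) (hqXpos : ∀ x, 0 < qX x)
    {qY : Y → ℝ} (hqY : IsPMF qY) (hqYpos : ∀ y, 0 < qY y) :
    FtildeLP α pYX pX qt (post qt) ≤
      (1 / (α - 1)) * Real.log (∑ z : X × Y,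
        (pX z.1 * pYX z.1 z.2) ^ α * (qX z.1 * qY z.2) ^ (1 - α)) := by
  have hα1 : (0:ℝ) < α - 1 := by linarith
  set a : X × Y → ℝ :=
    fun z => (pX z.1 * pYX z.1 z.2) ^ α * (qX z.1 * qY z.2) ^ (1 - α) with ha
  have hapos : ∀ z, 0 < a z := fun z =>
    mul_pos (Real.rpow_pos_of_pos (mul_pos (hpXpos z.1) (hpYX z.1 z.2)) _)
      (Real.rpow_pos_of_pos (mul_pos (hqXpos z.1) (hqYpos z.2)) _)
  set S : ℝ := ∑ z, a z with hS
  have hSpos : 0 < S := Finset.sum_pos (fun z _ => hapos z) Finset.univ_nonempty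
  -- Jensen: J ≤ log S
  have hJ : ∑ z : X × Y, qt z * Real.log (a z / qt z) ≤ Real.log S := by
    have hgibbs := gibbs_aux qt (fun z => a z / S) (fun z => (hqtpos z).le)
      (fun z => div_pos (hapos z) hSpos)
      (by rw [← Finset.sum_div, ← hS, div_self (ne_of_gt hSpos), hqt1])
    have e : ∀ z : X × Y, qt z * Real.log (qt z / (a z / S))
        = qt z * Real.log S - qt z * Real.log (a z / qt z) := by
      intro z
      rw [Real.log_div (ne_of_gt (hqtpos z)) (ne_of_gt (div_pos (hapos z) hSpos)),
        Real.log_div (ne_of_gt (hapos z)) (ne_of_gt hSpos),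
        Real.log_div (ne_of_gt (hapos z)) (ne_of_gt (hqtpos z))]
      ring
    rw [Finset.sum_congr rfl (fun z _ => e z), Finset.sum_sub_distrib,
      ← Finset.sum_mul, hqt1, one_mul] at hgibbs
    linarith
  -- the identity: J = (α-1) F̃ + (α-1) D(mX‖qX) + (α-1) D(mY‖qY)
  have hmargsum : ∀ (f : X → ℝ), ∑ x, margX qt x * f x = ∑ z : X × Y, qt z * f z.1 := by
    intro f
    rw [Fintype.sum_prod_type]
    refine Finset.sum_congr rfl fun x _ => ?_
    rw [show margX qt x * f x = (∑ y, qt (x, y)) * f x from rfl, Finset.sum_mul]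
  have hmargsumY : ∀ (f : Y → ℝ),
      ∑ y, (∑ x, qt (x, y)) * f y = ∑ z : X × Y, qt z * f z.2 := by
    intro f
    rw [Fintype.sum_prod_type_right]
    refine Finset.sum_congr rfl fun y _ => ?_
    rw [Finset.sum_mul]
  have hident : ∑ z : X × Y, qt z * Real.log (a z / qt z)
      = (α - 1) * FtildeLP α pYX pX qt (post qt)
        + (α - 1) * klD (margX qt) qX
        + (α - 1) * klD (fun y => ∑ x, qt (x, y)) qY := by
    have hF : FtildeLP α pYX pX qt (post qt) =
        ∑ z : X × Y, qt z * ((α / (1 - α)) * Real.log (qt z / (margX qt z.1 * pYX z.1 z.2))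
          + Real.log (post qt z.2 z.1 / margX qt z.1)
          + (α / (1 - α)) * Real.log (margX qt z.1 / pX z.1)) := by
      unfold FtildeLP klD
      simp only [show ∀ x : X, (∑ y, qt (x, y)) = margX qt x from fun _ => rfl]
      rw [hmargsum (fun x => Real.log (margX qt x / pX x)),
        Finset.mul_sum, Finset.mul_sum, ← Finset.sum_add_distrib, ← Finset.sum_add_distrib]
      exact Finset.sum_congr rfl fun z _ => by ring
    have hKX : klD (margX qt) qX
        = ∑ z : X × Y, qt z * Real.log (margX qt z.1 / qX z.1) :=
      hmargsum (fun x => Real.log (margX qt x / qX x))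
    have hKY : klD (fun y => ∑ x, qt (x, y)) qY
        = ∑ z : X × Y, qt z * Real.log ((∑ x, qt (x, z.2)) / qY z.2) :=
      hmargsumY (fun y => Real.log ((∑ x, qt (x, y)) / qY y))
    rw [hF, hKX, hKY, Finset.mul_sum, Finset.mul_sum, Finset.mul_sum,
      ← Finset.sum_add_distrib, ← Finset.sum_add_distrib]
    refine Finset.sum_congr rfl fun z _ => ?_
    have hm : 0 < margX qt z.1 := margX_pos hqtpos z.1
    have hmY : 0 < ∑ x, qt (x, z.2) :=
      Finset.sum_pos (fun x _ => hqtpos (x, z.2)) Finset.univ_nonempty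
    have hpo := post_pos hqtpos z.2 z.1
    have hqz := hqtpos z
    have hpx := hpXpos z.1
    have hpyx := hpYX z.1 z.2
    have hqx := hqXpos z.1
    have hqy := hqYpos z.2
    have hsplit : Real.log (qt z) = Real.log (∑ x', qt (x', z.2))
        + Real.log (post qt z.2 z.1) := by
      conv_lhs => rw [show qt z = qt (z.1, z.2) from by rw [Prod.mk.eta],
        q_eq_post hqtpos z.1 z.2]
      rw [Real.log_mul (ne_of_gt hmY) (ne_of_gt hpo)]
    rw [ha]
    rw [Real.log_div (by positivity) (by positivity),
      Real.log_mul (by positivity) (by positivity),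
      Real.log_rpow (by positivity), Real.log_rpow (by positivity),
      Real.log_mul (by positivity) (by positivity),
      Real.log_mul (by positivity) (by positivity),
      Real.log_div (by positivity) (by positivity),
      Real.log_mul (by positivity) (by positivity),
      Real.log_div (by positivity) (by positivity),
      Real.log_div (by positivity) (by positivity),
      Real.log_div (by positivity) (by positivity),
      Real.log_div (by positivity) (by positivity),
      hsplit]
    have hα1' : (1:ℝ) - α ≠ 0 := by linarith
    field_simp
    ring
  have hKXnn : (0:ℝ) ≤ klD (margX qt) qX :=
    klD_nonneg (fun x => (margX_pos hqtpos x).le) hqXpos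
      (by rw [hqX.2, (isPMF_margX ⟨fun z => (hqtpos z).le, hqt1⟩).2])
  have hKYnn : (0:ℝ) ≤ klD (fun y => ∑ x, qt (x, y)) qY := by
    apply klD_nonneg (fun y => Finset.sum_nonneg fun x _ => (hqtpos (x, y)).le) hqYpos
    rw [hqY.2]
    rw [show ∑ y, ∑ x, qt (x, y) = ∑ z : X × Y, qt z from
      (Fintype.sum_prod_type_right (f := fun z : X × Y => qt z)).symm, hqt1]
  have hmain : (α - 1) * FtildeLP α pYX pX qt (post qt) ≤ Real.log S := by
    nlinarith [hJ, hident]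
  calc FtildeLP α pYX pX qt (post qt)
      = (1 / (α - 1)) * ((α - 1) * FtildeLP α pYX pX qt (post qt)) := by
        field_simp
    _ ≤ (1 / (α - 1)) * Real.log S :=
        mul_le_mul_of_nonneg_left hmain (by positivity)

end Cap
end AOproof
namespace AOproof
set_option linter.unusedSectionVars false
open Finset Real

section CapE
variable {X Y : Type*} [Fintype X] [Fintype Y] [Nonempty X] [Nonempty Y]
variable {α : ℝ} {pYX : X → Y → ℝ}

lemma Ftilde_le_lpCap (hα : 1 < α) (hpYX : ∀ x y, 0 < pYX x y)
    {pX : X → ℝ} (hpX : IsPMF pX) (hpXpos : ∀ x, 0 < pX x)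
    {qt : X × Y → ℝ} (hqtpos : ∀ z, 0 < qt z) (hqt1 : ∑ z, qt z = 1) :
    ((FtildeLP α pYX pX qt (post qt) : ℝ) : EReal) ≤ lpCap α pYX := by
  unfold lpCap
  refine le_trans ?_ (le_sSup ⟨pX, hpX, rfl⟩)
  apply le_sInf
  rintro w ⟨qX, qY, hqX, hqY, rfl⟩
  unfold renyiDE
  by_cases htop : 1 < α ∧ ∃ z : X × Y, pX z.1 * pYX z.1 z.2 ≠ 0 ∧ qX z.1 * qY z.2 = 0
  · rw [if_pos htop]; exact le_top
  · rw [if_neg htop]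
    have hq0 : ∀ z : X × Y, qX z.1 * qY z.2 ≠ 0 := by
      intro z h
      exact htop ⟨hα, z, ne_of_gt (mul_pos (hpXpos z.1) (hpYX z.1 z.2)), h⟩
    have hqXpos : ∀ x, 0 < qX x := fun x =>
      lt_of_le_of_ne (hqX.1 x)
        (Ne.symm (mul_ne_zero_iff.mp (hq0 (x, Classical.arbitrary Y))).1)
    have hqYpos : ∀ y, 0 < qY y := fun y =>
      lt_of_le_of_ne (hqY.1 y)
        (Ne.symm (mul_ne_zero_iff.mp (hq0 (Classical.arbitrary X, y))).2)
    rw [EReal.coe_le_coe_iff]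
    exact Ftilde_le_renyi hα hpYX hpXpos hqtpos hqt1 hqX hqXpos hqY hqYpos

end CapE
end AOproof

/-- Monotonicity of the AO iterates: the objective values are nondecreasing and bounded
above by the Lapidoth--Pfister capacity `C_α^{LP}`. -/
theorem FtildeLP_iterates_monotone_le_cap {X Y : Type*} [Fintype X] [Fintype Y]
    [Nonempty X] [Nonempty Y]
    (α : ℝ) (hα : 1 < α)
    (pYX : X → Y → ℝ) (hpYX : ∀ x, IsPMF (pYX x)) (hpYXpos : ∀ x y, 0 < pYX x y)
    (q0 : X × Y → ℝ) (hq0 : IsPMF q0) (hq0pos : ∀ z, 0 < q0 z) :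
    ∀ k : ℕ,
      FtildeLP α pYX (pseq α pYX q0 k) (qseq α pYX q0 k) (post (qseq α pYX q0 k))
        ≤ FtildeLP α pYX (pseq α pYX q0 (k + 1)) (qseq α pYX q0 (k + 1))
            (post (qseq α pYX q0 k)) ∧
      FtildeLP α pYX (pseq α pYX q0 (k + 1)) (qseq α pYX q0 (k + 1))
          (post (qseq α pYX q0 k))
        ≤ FtildeLP α pYX (pseq α pYX q0 (k + 1)) (qseq α pYX q0 (k + 1))
            (post (qseq α pYX q0 (k + 1))) ∧
      ((FtildeLP α pYX (pseq α pYX q0 (k + 1)) (qseq α pYX q0 (k + 1))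
          (post (qseq α pYX q0 (k + 1))) : ℝ) : EReal)
        ≤ lpCap α pYX := by
  intro k
  obtain ⟨hkpos, hkpmf⟩ := AOproof.qseq_pos_pmf (α := α) hpYXpos hq0 hq0pos k
  obtain ⟨hk1pos, hk1pmf⟩ := AOproof.qseq_pos_pmf (α := α) hpYXpos hq0 hq0pos (k + 1)
  obtain ⟨hkmpos, hkmpmf⟩ := AOproof.qseq_pos_pmf (α := α) hpYXpos hq0 hq0pos (k - 1)
  have hpk : IsPMF (pseq α pYX q0 k) := AOproof.isPMF_margX hkmpmf
  have hpkpos : ∀ x, 0 < pseq α pYX q0 k x := AOproof.margX_pos hkmpos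
  have hpk1 : IsPMF (pseq α pYX q0 (k + 1)) := AOproof.isPMF_margX hkpmf
  have hpk1pos : ∀ x, 0 < pseq α pYX q0 (k + 1) x := AOproof.margX_pos hkpos
  have hps : pseq α pYX q0 (k + 1) = margX (qseq α pYX q0 k) := rfl
  have hqs : qseq α pYX q0 (k + 1) = nextq α pYX (qseq α pYX q0 k) := rfl
  refine ⟨?_, ?_, ?_⟩
  · rw [hps, hqs]
    exact le_trans
      (AOproof.step0 hα hpk hpkpos hkpmf hkpos (post (qseq α pYX q0 k)))
      (AOproof.step1 hα hpYXpos hkpmf hkpos)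
  · exact AOproof.step2 hα hk1pmf hk1pos (AOproof.post_pos hkpos)
      (AOproof.post_sum hkpos)
  · exact AOproof.Ftilde_le_lpCap hα hpYXpos hpk1 hpk1pos hk1pos hk1pmf.2
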